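/- arXiv:2308.05445 — 2 statements merged into one kernel-verified Lean document; each statement's English description precedes it below -/
import Mathlib

section
/- Under the heterogeneous GRR/IPQ setup: for every x > 0, every k ≥ 1, and every θ₀ > 0 satisfying Σ_{j=1}^η (d̃/d_j) α_j Λ(θ₀) − d̃ θ₀ b < 0, there exists a constant c' > 0, independent of n, such that for every admissible n the age violation probability of the k-th update of source (g,i) satisfies Pr( A ≥ n x ) ≤ (d̃ c' + 1) · exp( −n · min_{0 ≤ ℓ' ≤ k'} γ^{U,ℓ'}(x) ). -/
open MeasureTheory ProbabilityTheory Real Filter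

/-- Admissibility of a system size `n`: `n ≥ 1`, every `α g * n` is a natural number,
and `m * n` is a natural number. -/
def GRRAdmissible {η : ℕ} (α : Fin η → ℝ) (m : ℝ) (n : ℕ) : Prop :=
  1 ≤ n ∧ (∀ g : Fin η, ∃ j : ℕ, (j : ℝ) = α g * n) ∧ ∃ j : ℕ, (j : ℝ) = m * n

/-- The upper rate functions `γ^{U,ℓ'}(x)` of Theorem 1 (heterogeneous GRR/IPQ):
`γ^{U,0}(x) = sup_{θ>0} {θ(x - d_g b) - m Λ(θ)}` and, for `ℓ' ≥ 1`,
`γ^{U,ℓ'}(x) = ℓ' ⬝ sup_{θ>0} {θ(x/ℓ' + ((ℓ'-1)d̃ - d_g)b/ℓ') - (Σ_j (d̃/d_j)α_j + m/ℓ') Λ(θ)}`. -/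
noncomputable def gammaU {η : ℕ} (d : Fin η → ℕ) (dt : ℕ) (α : Fin η → ℝ) (b m : ℝ)
    (Λ : ℝ → ℝ) (gi : Fin η) (x : ℝ) (ℓ' : ℕ) : ℝ :=
  if ℓ' = 0 then
    sSup {z : ℝ | ∃ θ > 0, z = θ * (x - (d gi : ℝ) * b) - m * Λ θ}
  else
    (ℓ' : ℝ) * sSup {z : ℝ | ∃ θ > 0,
      z = θ * (x / (ℓ' : ℝ) + (((ℓ' : ℝ) - 1) * (dt : ℝ) - (d gi : ℝ)) * b / (ℓ' : ℝ)) -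
        ((∑ j : Fin η, (dt : ℝ) / (d j : ℝ) * α j) + m / (ℓ' : ℝ)) * Λ θ}

/-- If `P ≤ exp (c + ε)` for all `ε > 0` then `P ≤ exp c`. -/
lemma aux_le_exp_of_forall {P c : ℝ} (hP : 0 ≤ P) (h : ∀ ε > (0:ℝ), P ≤ exp (c + ε)) :
    P ≤ exp c := by
  rcases hP.eq_or_lt with h0 | h0
  · exact h0.symm ▸ (exp_pos c).le
  · rw [← Real.exp_log h0]
    apply Real.exp_le_exp.2
    refine le_of_forall_pos_le_add fun ε hε => ?_
    have := h ε hε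
    rw [← Real.exp_log h0] at this
    exact Real.exp_le_exp.1 this

/-- If `P ≤ exp (-(t*z))` for all `z` in a nonempty set, then `P ≤ exp (-(t * sSup s))`. -/
lemma aux_le_exp_sSup {P t : ℝ} (ht : 0 < t) {s : Set ℝ} (hne : s.Nonempty)
    (hP : 0 ≤ P) (h : ∀ z ∈ s, P ≤ exp (-(t * z))) : P ≤ exp (-(t * sSup s)) := by
  by_cases hbdd : BddAbove s
  · refine aux_le_exp_of_forall hP fun ε hε => ?_
    obtain ⟨z, hzs, hz⟩ := exists_lt_of_lt_csSup hne
      (show sSup s - ε / t < sSup s by have := div_pos hε ht; linarith)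
    refine (h z hzs).trans (Real.exp_le_exp.2 ?_)
    have h2 : sSup s - ε / t < z := hz
    nlinarith [mul_lt_mul_of_pos_left h2 ht, mul_div_cancel₀ ε ht.ne']
  · rw [Real.sSup_of_not_bddAbove hbdd]
    have hM : ∀ M : ℝ, ∃ z ∈ s, M < z := by
      intro M
      by_contra hcon
      push_neg at hcon
      exact hbdd ⟨M, fun z hz => hcon z hz⟩
    refine le_trans ?_ (exp_pos _).le
    by_contra hcon
    push_neg at hcon
    obtain ⟨z, hzs, hz⟩ := hM (-(Real.log P) / t)
    have h2 := h z hzs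
    have h3 : -(Real.log P) < t * z := by
      have := (div_lt_iff₀ ht).1 hz; linarith
    have h6 : exp (-(t*z)) < P := by
      calc exp (-(t*z)) < exp (Real.log P) := Real.exp_lt_exp.2 (by linarith)
      _ = P := Real.exp_log hcon
    exact absurd h2 (not_le.2 h6)

/-- Multiples of `d` (shifted by 1) in `[ℓ, K)` number at most `l' * (dtn / d)`
when `K - ℓ ≤ l' * dtn` and `d ∣ dtn`. -/
lemma aux_count (d dtn l' ℓ K : ℕ) (hd : 0 < d) (hdvd : d ∣ dtn) (hℓ : 1 ≤ ℓ)
    (hK : K ≤ ℓ + l' * dtn) :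
    ((Finset.Ico ℓ K).filter (fun r => d ∣ (r - 1))).card ≤ l' * (dtn / d) := by
  classical
  have hfilt : (Finset.Ico ℓ K).filter (fun r => d ∣ (r - 1)) =
      (Finset.Ico ℓ K).filter (fun r => r ≡ 1 [MOD d]) := by
    apply Finset.filter_congr
    intro r hr
    rw [Finset.mem_Ico] at hr
    have h1r : 1 ≤ r := le_trans hℓ hr.1
    constructor
    · intro h; exact ((Nat.modEq_iff_dvd' h1r).2 h).symm
    · intro h; exact (Nat.modEq_iff_dvd' h1r).1 h.symm
  rw [hfilt]
  have hcard := Nat.Ico_filter_modEq_card ℓ K hd 1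
  have hdQ : (0:ℚ) < d := by exact_mod_cast hd
  have hcast : ((dtn / d : ℕ) : ℚ) = (dtn : ℚ) / d := by
    rw [Nat.cast_div hdvd (by exact_mod_cast hd.ne' : (d:ℚ) ≠ 0)]
  have hceil : (⌈((K:ℚ) - 1) / d⌉ : ℤ) ≤ ⌈((ℓ:ℚ) - 1) / d⌉ + ((l' * (dtn / d) : ℕ) : ℤ) := by
    have h1 : ((K:ℚ) - 1) / d ≤ ((ℓ:ℚ) - 1) / d + (((l' * (dtn / d) : ℕ) : ℤ) : ℚ) := by
      have hKQ : ((K:ℚ) - 1) ≤ ((ℓ:ℚ) - 1) + (l' : ℚ) * dtn := by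
        have : (K:ℚ) ≤ (ℓ:ℚ) + (l':ℚ) * dtn := by exact_mod_cast hK
        linarith
      calc ((K:ℚ) - 1) / d ≤ (((ℓ:ℚ) - 1) + (l':ℚ) * dtn) / d := by gcongr
        _ = ((ℓ:ℚ) - 1) / d + (((l' * (dtn / d) : ℕ) : ℤ) : ℚ) := by
            rw [Int.cast_natCast, Nat.cast_mul, hcast, add_div, mul_div_assoc]
    calc (⌈((K:ℚ) - 1) / d⌉ : ℤ) ≤ ⌈((ℓ:ℚ) - 1) / d + (((l' * (dtn / d) : ℕ) : ℤ) : ℚ)⌉ :=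
          Int.ceil_mono h1
      _ = ⌈((ℓ:ℚ) - 1) / d⌉ + ((l' * (dtn / d) : ℕ) : ℤ) := Int.ceil_add_intCast _ _
  have hfin : (((Finset.Ico ℓ K).filter (fun r => r ≡ 1 [MOD d])).card : ℤ) ≤
      ((l' * (dtn / d) : ℕ) : ℤ) := by
    rw [hcard]
    apply max_le _ (by positivity)
    push_cast at hceil ⊢
    linarith
  exact_mod_cast hfin

lemma aux_div_facts (L dt : ℕ) (hdt : 0 < dt) :
    L ≤ ((L + dt - 1) / dt) * dt ∧ (((L + dt - 1) / dt) - 1) * dt ≤ L - 1 ∧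
      (((L + dt - 1) / dt) = 0 ↔ L = 0) := by
  rcases Nat.eq_zero_or_pos L with h0 | h0
  · subst h0
    have h : (0 + dt - 1) / dt = 0 := Nat.div_eq_of_lt (by omega)
    rw [h]
    simp
  · have hidx : L + dt - 1 = (L - 1) + dt := by omega
    have hl' : (L + dt - 1) / dt = (L - 1) / dt + 1 := by
      rw [hidx, Nat.add_div_right _ hdt]
    refine ⟨?_, ?_, ?_⟩
    · rw [hl', Nat.succ_mul]
      have h1 := Nat.div_add_mod (L - 1) dt
      have h2 := Nat.mod_lt (L - 1) hdt
      have h3 : (L - 1) / dt * dt = dt * ((L - 1) / dt) := Nat.mul_comm _ _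
      omega
    · rw [hl', Nat.add_sub_cancel]
      exact Nat.div_mul_le_self _ _
    · rw [hl']
      constructor
      · intro h; exact absurd h (Nat.succ_ne_zero _)
      · intro h; exact absurd h h0.ne'

set_option maxHeartbeats 1000000 in
/-- **Theorem 1 of the paper.** Upper bound on the age violation
probability of the `k`-th update of source `(g,i)` under GRR with the infinite packet
queueing (FCFS) discipline, uniformly over admissible system sizes `n`. -/
theorem stmt_3 {Ω : Type*} [MeasurableSpace Ω] (μ : Measure Ω) [IsProbabilityMeasure μ]
    -- group structure
    (η : ℕ) (hη : 0 < η) (d : Fin η → ℕ) (hd1 : d ⟨0, hη⟩ = 1) (hdmono : StrictMono d)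
    (dt : ℕ) (hdt : dt = Finset.univ.lcm d)
    (α : Fin η → ℝ) (hα : ∀ g, 0 < α g) (hαsum : ∑ g, α g = 1)
    (b : ℝ) (hb : 0 < b)
    -- the i.i.d. family of transmission times
    (X : ℕ → Ω → ℝ)
    (hmeas : ∀ j, Measurable (X j))
    (hindep : iIndepFun X μ)
    (hident : ∀ j, IdentDistrib (X j) (X 0) μ μ)
    (hnonneg : ∀ j ω, 0 ≤ X j ω)
    (hmgf : ∀ θ : ℝ, Integrable (fun ω => Real.exp (θ * X 0 ω)) μ)
    (Λ : ℝ → ℝ) (hΛ : ∀ θ, Λ θ = Real.log (∫ ω, Real.exp (θ * X 0 ω) ∂μ))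
    -- the fixed source (group `gi`), update index `k`, packet-position ratio `m`
    (gi : Fin η) (k : ℕ) (hk : 1 ≤ k) (m : ℝ) (hm : 0 < m)
    -- per-round index sets: for system size `n`, round `r` serves the packets `S n r`,
    -- and `Tset n` collects the `m n` packets served in round `k̃` up to and including
    -- the `k`-th packet of the tagged source; all these index sets are pairwise disjoint
    (S : ℕ → ℕ → Finset ℕ) (Tset : ℕ → Finset ℕ)
    (hScard : ∀ n, GRRAdmissible α m n → ∀ r, 1 ≤ r →
      ((S n r).card : ℝ) = ∑ g ∈ Finset.univ.filter (fun g => d g ∣ (r - 1)), α g * n)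
    (hSdisj : ∀ n r r', r ≠ r' → Disjoint (S n r) (S n r'))
    (hTdisj : ∀ n r, Disjoint (Tset n) (S n r))
    (hTcard : ∀ n, GRRAdmissible α m n → ((Tset n).card : ℝ) = m * n) :
    -- the statement
    ∀ x > 0, ∀ θ₀ > 0,
      (∑ j : Fin η, ((dt : ℝ) / (d j : ℝ)) * α j * Λ θ₀) - (dt : ℝ) * θ₀ * b < 0 →
      ∃ c' > 0, ∀ n, GRRAdmissible α m n →
        (μ {ω | (n : ℝ) * x ≤
            (Finset.Icc 1 (d gi * (k - 1) + 1)).sup'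
                (Finset.nonempty_Icc.mpr (Nat.le_add_left 1 _))
                (fun ℓ => (∑ r ∈ Finset.Ico ℓ (d gi * (k - 1) + 1), ∑ j ∈ S n r, X j ω) -
                  (((d gi * (k - 1) + 1 : ℕ) : ℝ) - (ℓ : ℝ)) * (n : ℝ) * b) +
              (∑ j ∈ Tset n, X j ω) + (d gi : ℝ) * (n : ℝ) * b}).toReal ≤
          ((dt : ℝ) * c' + 1) *
            Real.exp (-(n : ℝ) *
              (Finset.range (⌈(((d gi * (k - 1) + 1 : ℕ) : ℝ) - 1) / (dt : ℝ)⌉₊ + 1)).inf'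
                (Finset.nonempty_range_iff.mpr (Nat.succ_ne_zero _))
                (gammaU d dt α b m Λ gi x)) := by
  classical
  intro x hx θ₀ hθ₀ _hneg
  -- positivity of the periods
  have hdpos : ∀ g, 0 < d g := by
    intro g
    have h1 : d ⟨0, hη⟩ ≤ d g := hdmono.monotone (by simp [Fin.le_def])
    omega
  have hddvd : ∀ g, d g ∣ dt := by
    intro g; rw [hdt]; exact Finset.dvd_lcm (Finset.mem_univ g)
  have hdtpos : 0 < dt := by
    rcases Nat.eq_zero_or_pos dt with h | h
    · exfalso
      rw [hdt, Finset.lcm_eq_zero_iff] at h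
      obtain ⟨g, -, hg⟩ := h
      exact absurd hg (hdpos g).ne'
    · exact h
  set K := d gi * (k - 1) + 1 with hKdef
  have hK1 : 1 ≤ K := Nat.le_add_left 1 _
  set k' := ⌈((K : ℝ) - 1) / (dt : ℝ)⌉₊ with hk'def
  set C := ∑ j : Fin η, (dt : ℝ) / (d j : ℝ) * α j with hCdef
  -- Λ is nonnegative on positive arguments
  have hint1 : ∀ θ : ℝ, 0 ≤ θ → (1:ℝ) ≤ ∫ ω, Real.exp (θ * X 0 ω) ∂μ := by
    intro θ hθ
    have h1 : ∫ (_ : Ω), (1:ℝ) ∂μ = 1 := by simp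
    rw [← h1]
    apply integral_mono (integrable_const 1) (hmgf θ)
    intro ω
    simp only
    rw [show (1:ℝ) = Real.exp 0 by simp]
    exact Real.exp_le_exp.2 (mul_nonneg hθ (hnonneg 0 ω))
  have hΛ0 : ∀ θ : ℝ, 0 ≤ θ → 0 ≤ Λ θ := by
    intro θ hθ
    rw [hΛ]
    exact Real.log_nonneg (hint1 θ hθ)
  set G := (Finset.range (k' + 1)).inf'
      (Finset.nonempty_range_iff.mpr (Nat.succ_ne_zero _)) (gammaU d dt α b m Λ gi x) with hGdef
  refine ⟨(K : ℝ), by exact_mod_cast hK1, ?_⟩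
  intro n hadm
  have hnpos : (0:ℝ) < n := by exact_mod_cast hadm.1
  -- the union bound decomposition
  have hsub : {ω | (n : ℝ) * x ≤
      (Finset.Icc 1 K).sup' (Finset.nonempty_Icc.mpr (Nat.le_add_left 1 _))
        (fun ℓ => (∑ r ∈ Finset.Ico ℓ K, ∑ j ∈ S n r, X j ω) -
          ((K : ℝ) - (ℓ : ℝ)) * (n : ℝ) * b) +
        (∑ j ∈ Tset n, X j ω) + (d gi : ℝ) * (n : ℝ) * b} ⊆
      ⋃ ℓ ∈ Finset.Icc 1 K, {ω | (n : ℝ) * x ≤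
        (∑ r ∈ Finset.Ico ℓ K, ∑ j ∈ S n r, X j ω) - ((K : ℝ) - (ℓ : ℝ)) * (n : ℝ) * b +
        ((∑ j ∈ Tset n, X j ω) + (d gi : ℝ) * (n : ℝ) * b)} := by
    intro ω hω
    simp only [Set.mem_setOf_eq] at hω
    have h2 : (n : ℝ) * x - ((∑ j ∈ Tset n, X j ω) + (d gi : ℝ) * (n : ℝ) * b) ≤
        (Finset.Icc 1 K).sup' (Finset.nonempty_Icc.mpr (Nat.le_add_left 1 _))
          (fun ℓ => (∑ r ∈ Finset.Ico ℓ K, ∑ j ∈ S n r, X j ω) -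
            ((K : ℝ) - (ℓ : ℝ)) * (n : ℝ) * b) := by linarith
    rw [Finset.le_sup'_iff] at h2
    obtain ⟨ℓ, hℓ, hle⟩ := h2
    refine Set.mem_biUnion hℓ ?_
    simp only [Set.mem_setOf_eq]
    linarith
  -- per-ℓ Chernoff bound
  have key : ∀ ℓ ∈ Finset.Icc 1 K, (μ {ω | (n : ℝ) * x ≤
      (∑ r ∈ Finset.Ico ℓ K, ∑ j ∈ S n r, X j ω) - ((K : ℝ) - (ℓ : ℝ)) * (n : ℝ) * b +
      ((∑ j ∈ Tset n, X j ω) + (d gi : ℝ) * (n : ℝ) * b)}).toReal ≤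
      Real.exp (-(n : ℝ) * G) := by
    intro ℓ hℓ
    rw [Finset.mem_Icc] at hℓ
    obtain ⟨hℓ1, hℓK⟩ := hℓ
    -- the block index
    set L := K - ℓ with hLdef
    obtain ⟨l', hl'eq⟩ : ∃ l', l' = (L + dt - 1) / dt := ⟨_, rfl⟩
    have hfacts := aux_div_facts L dt hdtpos
    rw [← hl'eq] at hfacts
    obtain ⟨hLl', hl'L, hl'iff⟩ := hfacts
    -- `l'` is in range
    have hl'mem : l' ∈ Finset.range (k' + 1) := by
      rw [Finset.mem_range, Nat.lt_succ_iff]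
      rcases Nat.eq_zero_or_pos l' with h0 | h0
      · omega
      · have hLpos : 1 ≤ L := by
          rcases Nat.eq_zero_or_pos L with hL0 | hL0
          · exact absurd (hl'iff.2 hL0) h0.ne'
          · exact hL0
        have h1 : l' - 1 < k' := by
          rw [hk'def, Nat.lt_ceil]
          have h2 : ((l' - 1) * dt : ℕ) < (K - 1 : ℕ) := by
            have hLK1 : L ≤ K - 1 := by omega
            omega
          rw [lt_div_iff₀ (by exact_mod_cast hdtpos : (0:ℝ) < dt)]
          have h3 : ((K:ℝ) - 1) = ((K - 1 : ℕ) : ℝ) := by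
            push_cast [Nat.cast_sub hK1]; ring
          rw [h3]
          exact_mod_cast h2
        omega
    have hGle : G ≤ gammaU d dt α b m Λ gi x l' := Finset.inf'_le _ hl'mem
    -- it suffices to bound by the `l'`-th rate function
    suffices hsuff : (μ {ω | (n : ℝ) * x ≤
        (∑ r ∈ Finset.Ico ℓ K, ∑ j ∈ S n r, X j ω) - ((K : ℝ) - (ℓ : ℝ)) * (n : ℝ) * b +
        ((∑ j ∈ Tset n, X j ω) + (d gi : ℝ) * (n : ℝ) * b)}).toReal ≤
        Real.exp (-(n : ℝ) * gammaU d dt α b m Λ gi x l') by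
      refine hsuff.trans (Real.exp_le_exp.2 ?_)
      nlinarith
    -- the index set of the summed transmission times
    set I := ((Finset.Ico ℓ K).biUnion (S n)) ∪ Tset n with hIdef
    have hdisjI : Disjoint ((Finset.Ico ℓ K).biUnion (S n)) (Tset n) := by
      rw [Finset.disjoint_biUnion_left]
      exact fun r _ => (hTdisj n r).symm
    have hpair : ∀ r ∈ Finset.Ico ℓ K, ∀ r' ∈ Finset.Ico ℓ K, r ≠ r' →
        Disjoint (S n r) (S n r') := fun r _ r' _ hne => hSdisj n r r' hne
    have hIsum : ∀ ω, (∑ j ∈ I, X j) ω =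
        (∑ r ∈ Finset.Ico ℓ K, ∑ j ∈ S n r, X j ω) + ∑ j ∈ Tset n, X j ω := by
      intro ω
      rw [Finset.sum_apply]
      rw [Finset.sum_union hdisjI, Finset.sum_biUnion hpair]
    -- threshold
    set ε := (n : ℝ) * x + ((K : ℝ) - (ℓ : ℝ)) * (n : ℝ) * b - (d gi : ℝ) * (n : ℝ) * b with hεdef
    have hsetEq : {ω | (n : ℝ) * x ≤
        (∑ r ∈ Finset.Ico ℓ K, ∑ j ∈ S n r, X j ω) - ((K : ℝ) - (ℓ : ℝ)) * (n : ℝ) * b +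
        ((∑ j ∈ Tset n, X j ω) + (d gi : ℝ) * (n : ℝ) * b)} =
        {ω | ε ≤ (∑ j ∈ I, X j) ω} := by
      ext ω
      simp only [Set.mem_setOf_eq, hIsum ω, hεdef]
      constructor <;> intro h <;> linarith
    -- the weight W
    set W := ∑ r ∈ Finset.Ico ℓ K, ∑ g ∈ Finset.univ.filter (fun g => d g ∣ (r - 1)), α g
      with hWdef
    have hWnonneg : 0 ≤ W := by
      apply Finset.sum_nonneg
      intro r _
      exact Finset.sum_nonneg fun g _ => (hα g).le
    -- cardinality of I
    have hcardI : (I.card : ℝ) = (W + m) * n := by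
      rw [hIdef, Finset.card_union_of_disjoint hdisjI, Finset.card_biUnion hpair]
      push_cast
      rw [hTcard n hadm]
      rw [Finset.sum_congr rfl (fun r hr => hScard n hadm r
        (le_trans hℓ1 (Finset.mem_Ico.1 hr).1))]
      have hrw : ∀ r ∈ Finset.Ico ℓ K,
          (∑ g ∈ Finset.univ.filter (fun g => d g ∣ (r - 1)), α g * (n:ℝ)) =
          (∑ g ∈ Finset.univ.filter (fun g => d g ∣ (r - 1)), α g) * (n:ℝ) :=
        fun r _ => (Finset.sum_mul _ _ _).symm
      rw [Finset.sum_congr rfl hrw, ← Finset.sum_mul, ← hWdef]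
      ring
    -- the bound on W
    have hWC : W ≤ (l' : ℝ) * C := by
      have hWeq : W = ∑ g : Fin η,
          ((((Finset.Ico ℓ K).filter (fun r => d g ∣ (r - 1))).card : ℝ) * α g) := by
        rw [hWdef]
        calc ∑ r ∈ Finset.Ico ℓ K, ∑ g ∈ Finset.univ.filter (fun g => d g ∣ (r - 1)), α g
            = ∑ r ∈ Finset.Ico ℓ K, ∑ g : Fin η, if d g ∣ (r - 1) then α g else 0 := by
              exact Finset.sum_congr rfl fun r _ => Finset.sum_filter _ _
          _ = ∑ g : Fin η, ∑ r ∈ Finset.Ico ℓ K, if d g ∣ (r - 1) then α g else 0 :=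
              Finset.sum_comm
          _ = ∑ g : Fin η, ∑ r ∈ (Finset.Ico ℓ K).filter (fun r => d g ∣ (r - 1)), α g := by
              exact Finset.sum_congr rfl fun g _ => (Finset.sum_filter _ _).symm
          _ = _ := by
              exact Finset.sum_congr rfl fun g _ => by
                rw [Finset.sum_const, nsmul_eq_mul]
      rw [hWeq, hCdef, Finset.mul_sum]
      apply Finset.sum_le_sum
      intro g _
      have hcount := aux_count (d g) dt l' ℓ K (hdpos g) (hddvd g) hℓ1 (by omega)
      have hcast : ((l' * (dt / d g) : ℕ) : ℝ) = (l' : ℝ) * ((dt : ℝ) / (d g : ℝ)) := by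
        push_cast [Nat.cast_div (hddvd g) (by exact_mod_cast (hdpos g).ne' : ((d g : ℕ) : ℝ) ≠ 0)]
        ring
      have h2 : ((((Finset.Ico ℓ K).filter (fun r => d g ∣ (r - 1))).card : ℝ)) ≤
          (l' : ℝ) * ((dt : ℝ) / (d g : ℝ)) := by
        rw [← hcast]
        exact_mod_cast hcount
      have := mul_le_mul_of_nonneg_right h2 (hα g).le
      linarith [this]
    -- Chernoff bound for each θ > 0
    have cher : ∀ θ : ℝ, 0 < θ →
        (μ {ω | ε ≤ (∑ j ∈ I, X j) ω}).toReal ≤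
        Real.exp (-θ * ε + (W + m) * (n : ℝ) * Λ θ) := by
      intro θ hθ
      have hintX : ∀ i : ℕ, Integrable (fun ω => Real.exp (θ * X i ω)) μ := by
        intro i
        have hg : Measurable fun y : ℝ => Real.exp (θ * y) :=
          (measurable_id.const_mul θ).exp
        have hid : IdentDistrib (fun ω => Real.exp (θ * X i ω))
            (fun ω => Real.exp (θ * X 0 ω)) μ μ := (hident i).comp hg
        exact hid.integrable_iff.2 (hmgf θ)
      have hintSum := hindep.integrable_exp_mul_sum hmeas (s := I) (fun i _ => hintX i)
      have hch := measure_ge_le_exp_mul_mgf (μ := μ) (X := ∑ j ∈ I, X j) ε hθ.le hintSum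
      have hmgf0 : mgf (X 0) μ θ = Real.exp (Λ θ) := by
        rw [hΛ, Real.exp_log (lt_of_lt_of_le one_pos (hint1 θ hθ.le))]
        rfl
      have hmgfsum : mgf (∑ j ∈ I, X j) μ θ = Real.exp ((I.card : ℝ) * Λ θ) := by
        rw [hindep.mgf_sum hmeas]
        have heach : ∀ j ∈ I, mgf (X j) μ θ = Real.exp (Λ θ) := by
          intro j _
          rw [← hmgf0]
          have hg : Measurable fun y : ℝ => Real.exp (θ * y) :=
            (measurable_id.const_mul θ).exp
          exact ((hident j).comp hg).integral_eq
        rw [Finset.prod_congr rfl heach, Finset.prod_const, ← Real.exp_nat_mul]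
      rw [hmgfsum, hcardI] at hch
      refine hch.trans (le_of_eq ?_)
      rw [← Real.exp_add]
    -- now split on whether l' = 0
    rw [hsetEq]
    rcases Nat.eq_zero_or_pos l' with hl'0 | hl'pos
    · -- ℓ = K, W = 0
      have hL0 : L = 0 := hl'iff.1 hl'0
      have hℓK' : ℓ = K := by omega
      have hW0 : W = 0 := by
        rw [hWdef, hℓK']
        simp
      rw [gammaU, if_pos hl'0]
      have haux := aux_le_exp_sSup (t := (n : ℝ))
        (P := (μ {ω | ε ≤ (∑ j ∈ I, X j) ω}).toReal) hnpos
        (s := {z : ℝ | ∃ θ > 0, z = θ * (x - (d gi : ℝ) * b) - m * Λ θ})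
        ⟨θ₀ * (x - (d gi : ℝ) * b) - m * Λ θ₀, θ₀, hθ₀, rfl⟩
        ENNReal.toReal_nonneg ?_
      · refine haux.trans (le_of_eq ?_)
        congr 1
        ring
      · rintro z ⟨θ, hθ, rfl⟩
        refine (cher θ hθ).trans (Real.exp_le_exp.2 (le_of_eq ?_))
        have hKℓ : (K : ℝ) - (ℓ : ℝ) = 0 := by rw [hℓK']; ring
        rw [hεdef, hW0, hKℓ]
        ring
    · -- l' ≥ 1
      have hl'ne : l' ≠ 0 := hl'pos.ne'
      rw [gammaU, if_neg hl'ne]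
      have hl'R : (0:ℝ) < l' := by exact_mod_cast hl'pos
      have haux := aux_le_exp_sSup (t := (n : ℝ) * (l' : ℝ))
        (P := (μ {ω | ε ≤ (∑ j ∈ I, X j) ω}).toReal) (by positivity)
        (s := {z : ℝ | ∃ θ > 0,
          z = θ * (x / (l' : ℝ) + (((l' : ℝ) - 1) * (dt : ℝ) - (d gi : ℝ)) * b / (l' : ℝ)) -
            (C + m / (l' : ℝ)) * Λ θ})
        ⟨θ₀ * (x / (l' : ℝ) + (((l' : ℝ) - 1) * (dt : ℝ) - (d gi : ℝ)) * b / (l' : ℝ)) -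
            (C + m / (l' : ℝ)) * Λ θ₀, θ₀, hθ₀, rfl⟩ ENNReal.toReal_nonneg ?_
      · refine haux.trans (le_of_eq ?_)
        congr 1
        ring
      · rintro z ⟨θ, hθ, rfl⟩
        refine (cher θ hθ).trans (Real.exp_le_exp.2 ?_)
        -- main exponent comparison
        have hl'z : (n : ℝ) * (l' : ℝ) *
            (θ * (x / (l' : ℝ) + (((l' : ℝ) - 1) * (dt : ℝ) - (d gi : ℝ)) * b / (l' : ℝ)) -
              (C + m / (l' : ℝ)) * Λ θ) =
            (n : ℝ) * (θ * x + θ * (((l' : ℝ) - 1) * (dt : ℝ) - (d gi : ℝ)) * b -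
              ((l' : ℝ) * C + m) * Λ θ) := by
          field_simp
        have hdtK : ((l' : ℝ) - 1) * (dt : ℝ) ≤ (K : ℝ) - (ℓ : ℝ) := by
          have h1 : ((l' - 1) * dt : ℕ) ≤ (K - ℓ : ℕ) := by omega
          have h2 : (((l' - 1) * dt : ℕ) : ℝ) ≤ ((K - ℓ : ℕ) : ℝ) := Nat.cast_le.2 h1
          rw [Nat.cast_mul, Nat.cast_sub hl'pos, Nat.cast_sub hℓK, Nat.cast_one] at h2
          exact h2
        have hΛθ : 0 ≤ Λ θ := hΛ0 θ hθ.le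
        have t1 : W * Λ θ ≤ (l' : ℝ) * C * Λ θ := mul_le_mul_of_nonneg_right hWC hΛθ
        have t2 : ((l' : ℝ) - 1) * (dt : ℝ) * (θ * b) ≤ ((K : ℝ) - (ℓ : ℝ)) * (θ * b) :=
          mul_le_mul_of_nonneg_right hdtK (by positivity)
        have hgoal : -θ * ε + (W + m) * (n : ℝ) * Λ θ ≤
            -((n : ℝ) * (l' : ℝ) *
            (θ * (x / (l' : ℝ) + (((l' : ℝ) - 1) * (dt : ℝ) - (d gi : ℝ)) * b / (l' : ℝ)) -
              (C + m / (l' : ℝ)) * Λ θ)) := by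
          rw [hl'z]
          rw [hεdef]
          have hq : -θ * ((n : ℝ) * x + ((K : ℝ) - (ℓ : ℝ)) * (n : ℝ) * b -
              (d gi : ℝ) * (n : ℝ) * b) + (W + m) * (n : ℝ) * Λ θ =
              (n : ℝ) * (-(θ * (x + ((K : ℝ) - (ℓ : ℝ)) * b - (d gi : ℝ) * b)) +
                (W + m) * Λ θ) := by ring
          have hq' : -((n : ℝ) * (θ * x + θ * (((l' : ℝ) - 1) * (dt : ℝ) - (d gi : ℝ)) * b -
              ((l' : ℝ) * C + m) * Λ θ)) =
              (n : ℝ) * (-(θ * x + θ * (((l' : ℝ) - 1) * (dt : ℝ) - (d gi : ℝ)) * b) +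
                ((l' : ℝ) * C + m) * Λ θ) := by ring
          rw [hq, hq']
          refine mul_le_mul_of_nonneg_left ?_ hnpos.le
          nlinarith [t1, t2]
        exact hgoal
  -- assemble
  calc (μ {ω | (n : ℝ) * x ≤
      (Finset.Icc 1 K).sup' (Finset.nonempty_Icc.mpr (Nat.le_add_left 1 _))
        (fun ℓ => (∑ r ∈ Finset.Ico ℓ K, ∑ j ∈ S n r, X j ω) -
          ((K : ℝ) - (ℓ : ℝ)) * (n : ℝ) * b) +
        (∑ j ∈ Tset n, X j ω) + (d gi : ℝ) * (n : ℝ) * b}).toReal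
      ≤ (∑ ℓ ∈ Finset.Icc 1 K, μ {ω | (n : ℝ) * x ≤
          (∑ r ∈ Finset.Ico ℓ K, ∑ j ∈ S n r, X j ω) - ((K : ℝ) - (ℓ : ℝ)) * (n : ℝ) * b +
          ((∑ j ∈ Tset n, X j ω) + (d gi : ℝ) * (n : ℝ) * b)}).toReal := by
        apply ENNReal.toReal_mono
        · exact (ENNReal.sum_lt_top.2 fun ℓ _ => (measure_lt_top μ _)).ne
        · exact le_trans (measure_mono hsub) (measure_biUnion_finset_le _ _)
    _ = ∑ ℓ ∈ Finset.Icc 1 K, (μ {ω | (n : ℝ) * x ≤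
          (∑ r ∈ Finset.Ico ℓ K, ∑ j ∈ S n r, X j ω) - ((K : ℝ) - (ℓ : ℝ)) * (n : ℝ) * b +
          ((∑ j ∈ Tset n, X j ω) + (d gi : ℝ) * (n : ℝ) * b)}).toReal := by
        exact ENNReal.toReal_sum fun ℓ _ => (measure_lt_top μ _).ne
    _ ≤ ∑ ℓ ∈ Finset.Icc 1 K, Real.exp (-(n : ℝ) * G) := Finset.sum_le_sum key
    _ = (K : ℝ) * Real.exp (-(n : ℝ) * G) := by
        rw [Finset.sum_const, Nat.card_Icc]
        simp [nsmul_eq_mul]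
    _ ≤ ((dt : ℝ) * (K : ℝ) + 1) * Real.exp (-(n : ℝ) * G) := by
        apply mul_le_mul_of_nonneg_right _ (Real.exp_pos _).le
        have h1 : (1:ℝ) ≤ (dt : ℝ) := by exact_mod_cast hdtpos
        nlinarith [show (0:ℝ) < K by exact_mod_cast hK1]
end

section
/- Under the heterogeneous GRR/IPQ setup with, for each update index k ≥ 1, the packet-position ratio m = m(ζ(k)) depending only on the residue ζ(k) ∈ {1, …, d̃/d_g} of k modulo d̃/d_g, and A(k) the corresponding peak age: if there exists θ₀ > 0 with Σ_{j=1}^η (d̃/d_j) α_j Λ(θ₀) − d̃ θ₀ b < 0 and c' > 0 is the constant from the upper bound of Theorem 1, then the long-run fraction of age violation satisfies limsup_{κ→∞} (1/κ) Σ_{k=1}^κ Pr( A(k) ≥ n x ) ≤ Σ_{ζ=1}^{d̃/d_g} (d_g/d̃) (d̃ c' + 1) exp( −n · inf_{ℓ' ≥ 0} γ^{U,ℓ'}(x, ζ) ), where γ^{U,ℓ'}(x, ζ) is the rate function computed with m = m(ζ) and ℓ' ranging over all nonnegative integers. -/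
open MeasureTheory ProbabilityTheory Real Filter

/-- The peak age of the `k`-th update of the tagged source of group `gi` under GRR/IPQ
(Lemma 2 of the paper), with per-round index sets `S` and within-round index sets `Tset`. -/
noncomputable def peakAgeGRR {Ω : Type*} {η : ℕ} (X : ℕ → Ω → ℝ) (S : ℕ → Finset ℕ)
    (Tset : ℕ → Finset ℕ) (d : Fin η → ℕ) (gi : Fin η) (n : ℕ) (b : ℝ) (k : ℕ)
    (ω : Ω) : ℝ :=
  (Finset.Icc 1 (d gi * (k - 1) + 1)).sup' (Finset.nonempty_Icc.mpr (Nat.le_add_left 1 _))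
      (fun ℓ => (∑ r ∈ Finset.Ico ℓ (d gi * (k - 1) + 1), ∑ j ∈ S r, X j ω) -
        (((d gi * (k - 1) + 1 : ℕ) : ℝ) - (ℓ : ℝ)) * (n : ℝ) * b) +
    (∑ j ∈ Tset k, X j ω) + (d gi : ℝ) * (n : ℝ) * b

/-- **Corollary 2 of the paper.** Long-run fraction of age violation under
GRR/IPQ: with the packet-position ratio depending only on the residue `ζ(k)` of `k` modulo
`d̃/d_g`, and `c'` the constant for which the Theorem 1 upper bound holds, the long-run
fraction of age violation is bounded by
`Σ_{ζ=1}^{d̃/d_g} (d_g/d̃)(d̃ c' + 1) exp(-n inf_{ℓ' ≥ 0} γ^{U,ℓ'}(x, ζ))`. -/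
theorem stmt_6 {Ω : Type*} [MeasurableSpace Ω] (μ : Measure Ω) [IsProbabilityMeasure μ]
    -- group structure
    (η : ℕ) (hη : 0 < η) (d : Fin η → ℕ) (hd1 : d ⟨0, hη⟩ = 1) (hdmono : StrictMono d)
    (dt : ℕ) (hdt : dt = Finset.univ.lcm d)
    (α : Fin η → ℝ) (hα : ∀ g, 0 < α g) (hαsum : ∑ g, α g = 1)
    (b : ℝ) (hb : 0 < b)
    -- the i.i.d. family of transmission times
    (X : ℕ → Ω → ℝ)
    (hmeas : ∀ j, Measurable (X j))
    (hindep : iIndepFun X μ)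
    (hident : ∀ j, IdentDistrib (X j) (X 0) μ μ)
    (hnonneg : ∀ j ω, 0 ≤ X j ω)
    (hmgf : ∀ θ : ℝ, Integrable (fun ω => Real.exp (θ * X 0 ω)) μ)
    (Λ : ℝ → ℝ) (hΛ : ∀ θ, Λ θ = Real.log (∫ ω, Real.exp (θ * X 0 ω) ∂μ))
    -- the tagged group `gi`; `p = d̃ / d_g`, and `ζ k = (k mod p) + 1` is the residue of `k`
    (gi : Fin η) (p : ℕ) (hp : d gi * p = dt)
    -- a fixed admissible system size `n`
    (n : ℕ) (hn : 1 ≤ n) (hadm : ∀ g : Fin η, ∃ j : ℕ, (j : ℝ) = α g * n)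
    -- the packet-position ratios, depending only on the residue
    (mfun : ℕ → ℝ) (hmfun : ∀ ζ ∈ Finset.Icc 1 p, 0 < mfun ζ)
    (hmadm : ∀ ζ ∈ Finset.Icc 1 p, ∃ j : ℕ, (j : ℝ) = mfun ζ * n)
    -- per-round and within-round index sets (pairwise disjoint pieces of the i.i.d. family)
    (S : ℕ → Finset ℕ) (Tset : ℕ → Finset ℕ)
    (hScard : ∀ r, 1 ≤ r →
      ((S r).card : ℝ) = ∑ g ∈ Finset.univ.filter (fun g => d g ∣ (r - 1)), α g * n)
    (hSdisj : ∀ r r', r ≠ r' → Disjoint (S r) (S r'))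
    (hTdisj : ∀ k r, Disjoint (Tset k) (S r))
    (hTcard : ∀ k, 1 ≤ k → ((Tset k).card : ℝ) = mfun (k % p + 1) * n)
    -- the threshold and the stability condition of Theorem 1
    (x : ℝ) (hx : 0 < x)
    (hstab : ∃ θ₀ > 0,
      (∑ j : Fin η, ((dt : ℝ) / (d j : ℝ)) * α j * Λ θ₀) - (dt : ℝ) * θ₀ * b < 0)
    -- `c'` is the constant from the upper bound of Theorem 1
    (c' : ℝ) (hc' : 0 < c')
    (hbound : ∀ k, 1 ≤ k →
      (μ {ω | (n : ℝ) * x ≤ peakAgeGRR X S Tset d gi n b k ω}).toReal ≤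
        ((dt : ℝ) * c' + 1) *
          Real.exp (-(n : ℝ) *
            (Finset.range (⌈(((d gi * (k - 1) + 1 : ℕ) : ℝ) - 1) / (dt : ℝ)⌉₊ + 1)).inf'
              (Finset.nonempty_range_iff.mpr (Nat.succ_ne_zero _))
              (gammaU d dt α b (mfun (k % p + 1)) Λ gi x))) :
    Filter.atTop.limsup (fun κ : ℕ =>
        (κ : ℝ)⁻¹ * ∑ k ∈ Finset.Icc 1 κ,
          (μ {ω | (n : ℝ) * x ≤ peakAgeGRR X S Tset d gi n b k ω}).toReal) ≤
      ∑ ζ ∈ Finset.Icc 1 p,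
        ((d gi : ℝ) / (dt : ℝ)) * ((dt : ℝ) * c' + 1) *
          Real.exp (-(n : ℝ) *
            sInf (Set.range (fun ℓ' : ℕ => gammaU d dt α b (mfun ζ) Λ gi x ℓ'))) := by
  classical
  -- basic positivity facts
  have hdpos : ∀ j, 1 ≤ d j := by
    intro j
    have h0 : (⟨0, hη⟩ : Fin η) ≤ j := Fin.mk_le_of_le_val (Nat.zero_le _)
    have := hdmono.monotone h0
    omega
  have hdtpos : 1 ≤ dt := by
    rcases Nat.eq_zero_or_pos dt with h | h
    · exfalso
      rw [hdt] at h
      rw [Finset.lcm_eq_zero_iff] at h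
      obtain ⟨j, -, hj⟩ := h
      have := hdpos j
      omega
    · exact h
  have hppos : 1 ≤ p := by
    rcases Nat.eq_zero_or_pos p with h | h
    · exfalso; rw [h, Nat.mul_zero] at hp; omega
    · exact h
  set C : ℝ := (dt : ℝ) * c' + 1 with hCdef
  have hC1 : (1 : ℝ) ≤ C := by
    have : (1 : ℝ) ≤ (dt : ℝ) := by exact_mod_cast hdtpos
    nlinarith
  have hCpos : (0 : ℝ) < C := lt_of_lt_of_le one_pos hC1
  set B : ℕ → ℝ := fun ζ => C *
    Real.exp (-(n : ℝ) * sInf (Set.range (fun ℓ' : ℕ => gammaU d dt α b (mfun ζ) Λ gi x ℓ')))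
    with hBdef
  have hB0 : ∀ ζ, 0 ≤ B ζ := fun ζ => le_of_lt (mul_pos hCpos (Real.exp_pos _))
  set P : ℕ → ℝ := fun k =>
    (μ {ω | (n : ℝ) * x ≤ peakAgeGRR X S Tset d gi n b k ω}).toReal with hPdef
  have hP0 : ∀ k, 0 ≤ P k := fun k => ENNReal.toReal_nonneg
  have hP1 : ∀ k, P k ≤ 1 := by
    intro k
    have h := prob_le_one (μ := μ) (s := {ω | (n : ℝ) * x ≤ peakAgeGRR X S Tset d gi n b k ω})
    have := ENNReal.toReal_mono ENNReal.one_ne_top h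
    simpa using this
  -- Step 1: pointwise bound P k ≤ B (k % p + 1)
  have hPB : ∀ k, 1 ≤ k → P k ≤ B (k % p + 1) := by
    intro k hk
    set f : ℕ → ℝ := gammaU d dt α b (mfun (k % p + 1)) Λ gi x with hf
    by_cases hbb : BddBelow (Set.range f)
    · refine (hbound k hk).trans ?_
      refine mul_le_mul_of_nonneg_left (Real.exp_le_exp.mpr ?_) hCpos.le
      have h2 : sInf (Set.range fun ℓ' : ℕ => f ℓ') ≤
          (Finset.range (⌈(((d gi * (k - 1) + 1 : ℕ) : ℝ) - 1) / (dt : ℝ)⌉₊ + 1)).inf'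
            (Finset.nonempty_range_iff.mpr (Nat.succ_ne_zero _)) f := by
        obtain ⟨i, hi, heq⟩ := Finset.exists_mem_eq_inf'
          (Finset.nonempty_range_iff.mpr (Nat.succ_ne_zero
            (⌈(((d gi * (k - 1) + 1 : ℕ) : ℝ) - 1) / (dt : ℝ)⌉₊))) f
        rw [heq]
        exact csInf_le hbb ⟨i, rfl⟩
      have hn0 : (0 : ℝ) ≤ (n : ℝ) := Nat.cast_nonneg n
      nlinarith
    · have hs0 : sInf (Set.range fun ℓ' : ℕ => f ℓ') = 0 := Real.sInf_of_not_bddBelow hbb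
      calc P k ≤ 1 := hP1 k
        _ ≤ C := hC1
        _ = B (k % p + 1) := by
            simp [hBdef, ← hf, hs0]
  set Bsum : ℝ := ∑ ζ ∈ Finset.Icc 1 p, B ζ with hBsum
  have hBsum0 : 0 ≤ Bsum := Finset.sum_nonneg fun ζ _ => hB0 ζ
  -- Step 2: averaged bound for each κ ≥ 1
  have hkey : ∀ κ : ℕ, 1 ≤ κ →
      (κ : ℝ)⁻¹ * ∑ k ∈ Finset.Icc 1 κ, P k ≤ (p : ℝ)⁻¹ * Bsum + (κ : ℝ)⁻¹ * Bsum := by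
    intro κ hκ
    have hκpos : (0 : ℝ) < (κ : ℝ) := by exact_mod_cast hκ
    have hppos' : (0 : ℝ) < (p : ℝ) := by exact_mod_cast hppos
    have hmaps : ∀ k ∈ Finset.Icc 1 κ, k % p + 1 ∈ Finset.Icc 1 p := by
      intro k hk
      have := Nat.mod_lt k (show 0 < p by omega)
      simp only [Finset.mem_Icc]
      omega
    have hsum1 : ∑ k ∈ Finset.Icc 1 κ, P k ≤ ∑ k ∈ Finset.Icc 1 κ, B (k % p + 1) :=
      Finset.sum_le_sum fun k hk => hPB k (Finset.mem_Icc.mp hk).1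
    have hsum2 : ∑ k ∈ Finset.Icc 1 κ, B (k % p + 1) ≤ ((κ : ℝ) / (p : ℝ) + 1) * Bsum := by
      rw [← Finset.sum_fiberwise_of_maps_to hmaps (fun k => B (k % p + 1)), hBsum,
        Finset.mul_sum]
      refine Finset.sum_le_sum ?_
      intro ζ hζ
      have hcard : ((Finset.Icc 1 κ).filter (fun k => k % p + 1 = ζ)).card ≤ κ / p + 1 := by
        have : ((Finset.Icc 1 κ).filter (fun k => k % p + 1 = ζ)).card ≤
            (Finset.range (κ / p + 1)).card := by
          refine Finset.card_le_card_of_injOn (fun k => k / p) ?_ ?_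
          · intro k hk
            simp only [Finset.coe_filter, Finset.mem_filter, Finset.mem_Icc, Set.mem_setOf_eq] at hk
            simp only [Finset.coe_range, Set.mem_Iio, Finset.mem_coe, Finset.mem_range]
            exact Nat.lt_succ_of_le (Nat.div_le_div_right hk.1.2)
          · intro k hk k' hk' hkk
            simp only [Finset.coe_filter, Finset.mem_Icc, Set.mem_setOf_eq] at hk hk'
            have hkk' : k / p = k' / p := hkk
            have e1 := Nat.div_add_mod k p
            have e2 := Nat.div_add_mod k' p
            rw [← hkk'] at e2
            omega
        simpa using this
      calc ∑ k ∈ (Finset.Icc 1 κ).filter (fun k => k % p + 1 = ζ), B (k % p + 1)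
          = (((Finset.Icc 1 κ).filter (fun k => k % p + 1 = ζ)).card : ℝ) * B ζ := by
            rw [Finset.sum_congr rfl (fun k hk => by
              rw [(Finset.mem_filter.mp hk).2]), Finset.sum_const, nsmul_eq_mul]
        _ ≤ ((κ : ℝ) / (p : ℝ) + 1) * B ζ := by
            refine mul_le_mul_of_nonneg_right ?_ (hB0 ζ)
            calc (((Finset.Icc 1 κ).filter (fun k => k % p + 1 = ζ)).card : ℝ)
                ≤ ((κ / p + 1 : ℕ) : ℝ) := by exact_mod_cast hcard
              _ ≤ (κ : ℝ) / (p : ℝ) + 1 := by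
                  push_cast
                  have := Nat.cast_div_le (α := ℝ) (m := κ) (n := p)
                  linarith
    calc (κ : ℝ)⁻¹ * ∑ k ∈ Finset.Icc 1 κ, P k
        ≤ (κ : ℝ)⁻¹ * (((κ : ℝ) / (p : ℝ) + 1) * Bsum) := by
          refine mul_le_mul_of_nonneg_left (hsum1.trans hsum2) (by positivity)
      _ = (p : ℝ)⁻¹ * Bsum + (κ : ℝ)⁻¹ * Bsum := by
          field_simp
  -- Step 3: pass to the limsup
  have hRHS : (∑ ζ ∈ Finset.Icc 1 p,
      ((d gi : ℝ) / (dt : ℝ)) * ((dt : ℝ) * c' + 1) *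
        Real.exp (-(n : ℝ) *
          sInf (Set.range (fun ℓ' : ℕ => gammaU d dt α b (mfun ζ) Λ gi x ℓ'))))
      = (p : ℝ)⁻¹ * Bsum := by
    have hdgi : (0 : ℝ) < (d gi : ℝ) := by exact_mod_cast hdpos gi
    have hfrac : (d gi : ℝ) / (dt : ℝ) = (p : ℝ)⁻¹ := by
      have : (dt : ℝ) = (d gi : ℝ) * (p : ℝ) := by exact_mod_cast hp.symm
      rw [this]
      field_simp
    rw [hBsum, Finset.mul_sum]
    refine Finset.sum_congr rfl fun ζ _ => ?_
    rw [hfrac, hBdef, hCdef]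
    ring
  rw [hRHS]
  have htend : Tendsto (fun κ : ℕ => (p : ℝ)⁻¹ * Bsum + (κ : ℝ)⁻¹ * Bsum) atTop
      (nhds ((p : ℝ)⁻¹ * Bsum)) := by
    have h1 : Tendsto (fun κ : ℕ => (κ : ℝ)⁻¹ * Bsum) atTop (nhds (0 * Bsum)) :=
      tendsto_inv_atTop_nhds_zero_nat.mul_const Bsum
    have := (tendsto_const_nhds (x := (p : ℝ)⁻¹ * Bsum) (f := atTop)).add h1
    simpa using this
  have hle : (fun κ : ℕ => (κ : ℝ)⁻¹ * ∑ k ∈ Finset.Icc 1 κ, P k) ≤ᶠ[atTop]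
      (fun κ : ℕ => (p : ℝ)⁻¹ * Bsum + (κ : ℝ)⁻¹ * Bsum) := by
    filter_upwards [Filter.eventually_ge_atTop 1] with κ hκ
    exact hkey κ hκ
  have hcob : Filter.IsCoboundedUnder (· ≤ ·) atTop
      (fun κ : ℕ => (κ : ℝ)⁻¹ * ∑ k ∈ Finset.Icc 1 κ, P k) := by
    refine Filter.isCoboundedUnder_le_of_le atTop (x := 0) ?_
    intro κ
    exact mul_nonneg (inv_nonneg.mpr (Nat.cast_nonneg κ)) (Finset.sum_nonneg fun k _ => hP0 k)
  have hbdd : Filter.IsBoundedUnder (· ≤ ·) atTop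
      (fun κ : ℕ => (p : ℝ)⁻¹ * Bsum + (κ : ℝ)⁻¹ * Bsum) :=
    htend.isBoundedUnder_le
  calc Filter.atTop.limsup (fun κ : ℕ => (κ : ℝ)⁻¹ * ∑ k ∈ Finset.Icc 1 κ, P k)
      ≤ Filter.atTop.limsup (fun κ : ℕ => (p : ℝ)⁻¹ * Bsum + (κ : ℝ)⁻¹ * Bsum) :=
        Filter.limsup_le_limsup hle hcob hbdd
    _ = (p : ℝ)⁻¹ * Bsum := htend.limsup_eq
end
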